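/- Let L be a distributive lattice and F a presheaf on L (a contravariant functor from L as a poset category to a category C). Then F is a sheaf (i.e., for every finite family x₁,…,xₙ ∈ L, F(⋁ᵢ xᵢ) is the limit of the diagram F(xᵢ) → F(xᵢ ∧ xⱼ) ← F(xⱼ) for i < j) if and only if F(⊥) is terminal in C and for all x, y ∈ L the square F(x ∨ y) → F(x), F(x ∨ y) → F(y), F(x) → F(x ∧ y), F(y) → F(x ∧ y) is a pullback. -/

import Mathlib

open CategoryTheory CategoryTheory.Limits

universe u

/-- The cocone in `L` over the pairwise diagram of a finite family `x : Fin n → L`,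
with point the finite join `⋁ᵢ xᵢ`. -/
def finJoinCocone {L : Type u} [DistribLattice L] [OrderBot L] {n : ℕ}
    (x : Fin n → L) :
    Cocone (Pairwise.diagram (fun i : ULift.{u} (Fin n) => x i.down)) where
  pt := Finset.univ.sup x
  ι :=
    { app := fun p =>
        homOfLE
          (match p with
          | .single i => Finset.le_sup (f := x) (Finset.mem_univ i.down)
          | .pair i _ =>
              inf_le_left.trans (Finset.le_sup (f := x) (Finset.mem_univ i.down)))
      naturality := fun _ _ _ => Subsingleton.elim _ _ }

namespace LatticeSheafAux

variable {L : Type u} [DistribLattice L] {C : Type*} [Category C] (F : Lᵒᵖ ⥤ C)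

/-- Restriction map. -/
abbrev res {a b : L} (h : a ≤ b) : F.obj (Opposite.op b) ⟶ F.obj (Opposite.op a) :=
  F.map (homOfLE h).op

lemma res_res {a b c : L} (h1 : a ≤ b) (h2 : b ≤ c) :
    res F h2 ≫ res F h1 = res F (h1.trans h2) := by
  rw [← F.map_comp]; rfl

variable {ι : Type u}

/-- Build a cone over the `F`-image of a pairwise diagram from compatible legs. -/
@[simps pt]
def pairwiseCone (U : ι → L) (P : C) (f : ∀ i, P ⟶ F.obj (Opposite.op (U i)))
    (w : ∀ i j, f i ≫ res F (inf_le_left : U i ⊓ U j ≤ U i)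
      = f j ≫ res F (inf_le_right : U i ⊓ U j ≤ U j)) :
    Cone ((Pairwise.diagram U).op ⋙ F) where
  pt := P
  π :=
    { app := fun o =>
        match o with
        | .op (.single i) => f i
        | .op (.pair i j) => f i ≫ res F inf_le_left
      naturality := by
        rintro ⟨o₁⟩ ⟨o₂⟩ ⟨m⟩
        change Pairwise.Hom o₂ o₁ at m
        cases m with
        | id_single i => show 𝟙 P ≫ f i = f i ≫ F.map (𝟙 (U i)).op; simp
        | id_pair i j =>
            show 𝟙 P ≫ (f i ≫ res F inf_le_left) = (f i ≫ res F inf_le_left) ≫ F.map (𝟙 (U i ⊓ U j)).op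
            simp
        | left i j =>
            show 𝟙 P ≫ (f i ≫ res F inf_le_left) = f i ≫ F.map (homOfLE (inf_le_left : U i ⊓ U j ≤ U i)).op
            simp [res]
        | right i j =>
            show 𝟙 P ≫ (f i ≫ res F inf_le_left) = f j ≫ F.map (homOfLE (inf_le_right : U i ⊓ U j ≤ U j)).op
            simp only [Category.id_comp]
            simpa [res] using (w i j) }

@[simp] lemma pairwiseCone_app_single (U : ι → L) (P : C)
    (f : ∀ i, P ⟶ F.obj (Opposite.op (U i))) (w) (i : ι) :
    (pairwiseCone F U P f w).π.app (Opposite.op (.single i)) = f i := rfl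

/-- In any cone over `F` of a pairwise diagram, the pair legs factor through the single legs. -/
lemma cone_pair_fac {U : ι → L} (s : Cone ((Pairwise.diagram U).op ⋙ F)) (i j : ι) :
    s.π.app (Opposite.op (.pair i j))
      = s.π.app (Opposite.op (.single i)) ≫ res F inf_le_left := by
  exact (s.w (show Pairwise.pair i j ⟶ Pairwise.single i from Pairwise.Hom.left i j).op).symm

lemma cone_pair_fac' {U : ι → L} (s : Cone ((Pairwise.diagram U).op ⋙ F)) (i j : ι) :
    s.π.app (Opposite.op (.pair i j))
      = s.π.app (Opposite.op (.single j)) ≫ res F inf_le_right := by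
  exact (s.w (show Pairwise.pair i j ⟶ Pairwise.single j from Pairwise.Hom.right i j).op).symm

/-- Hom-ext for limits of pairwise diagrams: it suffices to check on single legs. -/
lemma pairwise_hom_ext {U : ι → L} {s : Cone ((Pairwise.diagram U).op ⋙ F)}
    (h : IsLimit s) {P : C} {m m' : P ⟶ s.pt}
    (w : ∀ i, m ≫ s.π.app (Opposite.op (.single i))
      = m' ≫ s.π.app (Opposite.op (.single i))) : m = m' := by
  apply h.hom_ext
  rintro ⟨o⟩
  cases o with
  | single i => exact w i
  | pair i j => erw [cone_pair_fac F s i j, reassoc_of% (w i)]; rfl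

end LatticeSheafAux

namespace LatticeSheafAux

section
variable {L : Type u} [DistribLattice L] [OrderBot L] {C : Type*} [Category C] (F : Lᵒᵖ ⥤ C)

lemma sup_univ_succ {n : ℕ} (x : Fin (n + 1) → L) :
    Finset.univ.sup x = x 0 ⊔ Finset.univ.sup (fun i : Fin n => x i.succ) := by
  rw [Fin.univ_succ]
  simp [Finset.sup_map, Function.comp_def]

lemma mapCone_leg {n : ℕ} (x : Fin n → L) (i : ULift.{u} (Fin n)) :
    (F.mapCone (finJoinCocone x).op).π.app (Opposite.op (.single i))
      = res F (Finset.le_sup (f := x) (Finset.mem_univ i.down)) := rfl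

/-- Build `IsLimit` for the image of the join cone from unique existence of factorizations
through the single legs. -/
noncomputable def isLimitOfExistsUnique {n : ℕ} (x : Fin n → L)
    (H : ∀ s : Cone ((Pairwise.diagram (fun i : ULift.{u} (Fin n) => x i.down)).op ⋙ F),
      ∃! l : s.pt ⟶ (F.mapCone (finJoinCocone x).op).pt,
        ∀ i, l ≫ (F.mapCone (finJoinCocone x).op).π.app (Opposite.op (.single i))
          = s.π.app (Opposite.op (.single i))) :
    IsLimit (F.mapCone (finJoinCocone x).op) where
  lift s := (H s).choose
  fac s := by
    rintro ⟨o⟩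
    cases o with
    | single i => exact (H s).choose_spec.1 i
    | pair i j =>
      erw [cone_pair_fac F _ i j, cone_pair_fac F s i j, ← Category.assoc,
        (H s).choose_spec.1 i]
      rfl
  uniq s m hm := (H s).choose_spec.2 m (fun i => hm (Opposite.op (.single i)))

/-- The base case: the empty join. -/
noncomputable def isLimitEmpty (hT : IsTerminal (F.obj (Opposite.op (⊥ : L))))
    (x : Fin 0 → L) : IsLimit (F.mapCone (finJoinCocone x).op) := by
  have hsup : Finset.univ.sup x = (⊥ : L) := by simp
  have hT' : IsTerminal (F.obj (Opposite.op (Finset.univ.sup x))) := by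
    rw [hsup]; exact hT
  have hemp : IsEmpty (Pairwise (ULift.{u} (Fin 0))) :=
    ⟨fun p => match p with
      | .single i => i.down.elim0
      | .pair i _ => i.down.elim0⟩
  exact
    { lift := fun s => hT'.from s.pt
      fac := fun s j => hemp.elim j.unop
      uniq := fun s m _ => hT'.hom_ext m _ }

/-- Generalized form of the pullback hypothesis. -/
lemma pb_gen
    (hpb : ∀ a b : L,
      IsPullback (res F (le_sup_left : a ≤ a ⊔ b)) (res F (le_sup_right : b ≤ a ⊔ b))
        (res F (inf_le_left : a ⊓ b ≤ a)) (res F (inf_le_right : a ⊓ b ≤ b)))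
    (a b p q : L) (hp : p = a ⊔ b) (hq : q = a ⊓ b)
    (h1 : a ≤ p) (h2 : b ≤ p) (h3 : q ≤ a) (h4 : q ≤ b) :
    IsPullback (res F h1) (res F h2) (res F h3) (res F h4) := by
  subst hp hq; exact hpb a b

end

end LatticeSheafAux

namespace LatticeSheafAux

section
variable {L : Type u} [DistribLattice L] [OrderBot L] {C : Type*} [Category C] (F : Lᵒᵖ ⥤ C)

set_option maxHeartbeats 1000000 in
/-- The inductive step. -/
noncomputable def step {n : ℕ} (x : Fin (n + 1) → L)
    (hy : IsLimit (F.mapCone (finJoinCocone (fun i : Fin n => x i.succ)).op))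
    (hw : IsLimit (F.mapCone (finJoinCocone (fun i : Fin n => x i.succ ⊓ x 0)).op))
    (hpb : ∀ a b : L,
      IsPullback (res F (le_sup_left : a ≤ a ⊔ b)) (res F (le_sup_right : b ≤ a ⊔ b))
        (res F (inf_le_left : a ⊓ b ≤ a)) (res F (inf_le_right : a ⊓ b ≤ b))) :
    IsLimit (F.mapCone (finJoinCocone x).op) := by
  set z : L := x 0 with hz_def
  set Y : L := Finset.univ.sup (fun i : Fin n => x i.succ) with hY_def
  set W : L := Finset.univ.sup (fun i : Fin n => x i.succ ⊓ x 0) with hW_def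
  set X : L := Finset.univ.sup x with hX_def
  have hp : X = z ⊔ Y := sup_univ_succ x
  have hq : W = z ⊓ Y := by
    rw [inf_comm]
    exact (Finset.sup_inf_distrib_right _ _ _).symm
  have hzX : z ≤ X := hp ▸ le_sup_left
  have hYX : Y ≤ X := hp ▸ le_sup_right
  have hWz : W ≤ z := hq ▸ inf_le_left
  have hWY : W ≤ Y := hq ▸ inf_le_right
  have hiY : ∀ i : Fin n, x i.succ ≤ Y :=
    fun i => Finset.le_sup (f := fun i : Fin n => x i.succ) (Finset.mem_univ i)
  have hiW : ∀ i : Fin n, x i.succ ⊓ x 0 ≤ W :=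
    fun i => Finset.le_sup (f := fun i : Fin n => x i.succ ⊓ x 0) (Finset.mem_univ i)
  have PB : IsPullback (res F hzX) (res F hYX) (res F hWz) (res F hWY) :=
    pb_gen F hpb z Y X W hp hq hzX hYX hWz hWY
  apply isLimitOfExistsUnique
  intro s
  -- single legs of `s`
  set σ : ∀ i : ULift.{u} (Fin (n + 1)), s.pt ⟶ F.obj (Opposite.op (x i.down)) :=
    fun i => s.π.app (Opposite.op (.single i)) with hσ
  have hpair : ∀ i j : ULift.{u} (Fin (n + 1)),
      σ i ≫ res F (inf_le_left : x i.down ⊓ x j.down ≤ x i.down)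
        = σ j ≫ res F (inf_le_right : x i.down ⊓ x j.down ≤ x j.down) := by
    intro i j
    rw [hσ]
    erw [← cone_pair_fac F s i j, cone_pair_fac' F s i j]; rfl
  -- the cone over the `y`-diagram
  have wy : ∀ i j : ULift.{u} (Fin n),
      σ ⟨i.down.succ⟩ ≫ res F (inf_le_left : x i.down.succ ⊓ x j.down.succ ≤ x i.down.succ)
        = σ ⟨j.down.succ⟩ ≫ res F inf_le_right :=
    fun i j => hpair ⟨i.down.succ⟩ ⟨j.down.succ⟩
  set cy : Cone ((Pairwise.diagram
      (fun i : ULift.{u} (Fin n) => (fun i : Fin n => x i.succ) i.down)).op ⋙ F) :=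
    pairwiseCone F _ s.pt (fun i => σ ⟨i.down.succ⟩) wy with hcy
  set a : s.pt ⟶ F.obj (Opposite.op Y) := hy.lift cy with ha_def
  have ha : ∀ i : Fin n, a ≫ res F (hiY i) = σ ⟨i.succ⟩ := by
    intro i
    have := hy.fac cy (Opposite.op (.single ⟨i⟩))
    rwa [mapCone_leg] at this
  -- the cone over the `w`-diagram
  set g : ∀ i : ULift.{u} (Fin n), s.pt ⟶ F.obj (Opposite.op (x i.down.succ ⊓ x 0)) :=
    fun i => s.π.app (Opposite.op (.pair ⟨i.down.succ⟩ ⟨0⟩)) with hg_def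
  have hgσ : ∀ i : ULift.{u} (Fin n),
      g i = σ ⟨i.down.succ⟩ ≫ res F inf_le_left :=
    fun i => cone_pair_fac F s ⟨i.down.succ⟩ ⟨0⟩
  have hgσ' : ∀ i : ULift.{u} (Fin n),
      g i = σ ⟨0⟩ ≫ res F inf_le_right :=
    fun i => cone_pair_fac' F s ⟨i.down.succ⟩ ⟨0⟩
  have wg : ∀ i j : ULift.{u} (Fin n),
      g i ≫ res F (inf_le_left :
          (x i.down.succ ⊓ x 0) ⊓ (x j.down.succ ⊓ x 0) ≤ x i.down.succ ⊓ x 0)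
        = g j ≫ res F inf_le_right := by
    intro i j
    have hle : (x i.down.succ ⊓ x 0) ⊓ (x j.down.succ ⊓ x 0) ≤ x i.down.succ ⊓ x j.down.succ :=
      le_inf (inf_le_left.trans inf_le_left) (inf_le_right.trans inf_le_left)
    have key := congrArg (· ≫ res F hle) (hpair ⟨i.down.succ⟩ ⟨j.down.succ⟩)
    simp only [Category.assoc, res_res] at key
    rw [hgσ i, hgσ j, Category.assoc, Category.assoc, res_res, res_res]
    exact key
  set cw : Cone ((Pairwise.diagram
      (fun i : ULift.{u} (Fin n) => (fun i : Fin n => x i.succ ⊓ x 0) i.down)).op ⋙ F) :=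
    pairwiseCone F _ s.pt g wg with hcw
  set c : s.pt ⟶ F.obj (Opposite.op W) := hw.lift cw with hc_def
  have hcfac : ∀ i : Fin n, c ≫ res F (hiW i) = g ⟨i⟩ := by
    intro i
    have := hw.fac cw (Opposite.op (.single ⟨i⟩))
    rwa [mapCone_leg] at this
  -- the compatibility over `W`
  have hcomm : σ ⟨0⟩ ≫ res F hWz = a ≫ res F hWY := by
    apply pairwise_hom_ext F hw
    intro i
    rw [mapCone_leg]
    have eL : (σ ⟨0⟩ ≫ res F hWz) ≫
        res F (Finset.le_sup (f := fun i : Fin n => x i.succ ⊓ x 0)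
          (Finset.mem_univ i.down)) = g i := by
      rw [Category.assoc, res_res]
      exact (hgσ' i).symm
    have eR : (a ≫ res F hWY) ≫
        res F (Finset.le_sup (f := fun i : Fin n => x i.succ ⊓ x 0)
          (Finset.mem_univ i.down)) = g i := by
      rw [Category.assoc, res_res]
      have key := congrArg
        (· ≫ res F (inf_le_left : x i.down.succ ⊓ x 0 ≤ x i.down.succ)) (ha i.down)
      simp only [Category.assoc, res_res] at key
      exact key.trans (hgσ i).symm
    exact eL.trans eR.symm
  -- the pullback-induced lift
  set l : s.pt ⟶ F.obj (Opposite.op X) := PB.lift (σ ⟨0⟩) a hcomm with hl_def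
  have hl1 : l ≫ res F hzX = σ ⟨0⟩ := PB.lift_fst _ _ _
  have hl2 : l ≫ res F hYX = a := PB.lift_snd _ _ _
  refine ⟨l, ?_, ?_⟩
  · -- factorization
    rintro ⟨i⟩
    induction i using Fin.cases with
    | zero =>
      rw [mapCone_leg]
      exact hl1
    | succ i =>
      rw [mapCone_leg]
      have key := congrArg (· ≫ res F (hiY i)) hl2
      simp only [Category.assoc, res_res] at key
      exact key.trans (ha i)
  · -- uniqueness
    intro m hm
    apply PB.hom_ext
    · rw [hl1]
      have := hm ⟨0⟩
      rw [mapCone_leg] at this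
      exact this
    · rw [hl2]
      apply pairwise_hom_ext F hy
      intro i
      rw [mapCone_leg]
      refine Eq.trans (b := m ≫ res F ((hiY i.down).trans hYX)) ?_ (Eq.trans (b := σ ⟨i.down.succ⟩) ?_ (ha i.down).symm)
      · erw [Category.assoc, res_res]; rfl
      · have := hm ⟨i.down.succ⟩
        rw [mapCone_leg] at this
        exact this

end

end LatticeSheafAux

namespace LatticeSheafAux

section
variable {L : Type u} [DistribLattice L] [OrderBot L] {C : Type*} [Category C] (F : Lᵒᵖ ⥤ C)

/-- The `n = 0` case gives terminality of `F ⊥`. -/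
noncomputable def isTerminalOf
    (h : IsLimit (F.mapCone (finJoinCocone (Fin.elim0 : Fin 0 → L)).op)) :
    IsTerminal (F.obj (Opposite.op (⊥ : L))) := by
  have hemp : IsEmpty (Pairwise (ULift.{u} (Fin 0))) :=
    ⟨fun p => match p with
      | .single i => i.down.elim0
      | .pair i _ => i.down.elim0⟩
  have hsup : Finset.univ.sup (Fin.elim0 : Fin 0 → L) = (⊥ : L) := by simp
  have hT : IsTerminal
      (F.obj (Opposite.op (Finset.univ.sup (Fin.elim0 : Fin 0 → L)))) := by
    refine IsTerminal.ofUniqueHom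
      (fun Y => h.lift ⟨Y, ⟨fun j => hemp.elim j.unop, fun j _ _ => hemp.elim j.unop⟩⟩) ?_
    intro Y m
    exact h.uniq ⟨Y, ⟨fun j => hemp.elim j.unop, fun j _ _ => hemp.elim j.unop⟩⟩ m
      (fun j => hemp.elim j.unop)
  rwa [hsup] at hT

/-- Legs for the cone induced by a pullback cone, two-element case. -/
def pairLegs {x : Fin 2 → L}
    (s : PullbackCone (res F (inf_le_left : x 0 ⊓ x 1 ≤ x 0))
      (res F (inf_le_right : x 0 ⊓ x 1 ≤ x 1))) :
    ∀ i : ULift.{u} (Fin 2), s.pt ⟶ F.obj (Opposite.op (x i.down))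
  | ⟨⟨0, _⟩⟩ => s.fst
  | ⟨⟨1, _⟩⟩ => s.snd
  | ⟨⟨n + 2, hn⟩⟩ => absurd hn (by omega)

lemma pairLegs_w {x : Fin 2 → L}
    (s : PullbackCone (res F (inf_le_left : x 0 ⊓ x 1 ≤ x 0))
      (res F (inf_le_right : x 0 ⊓ x 1 ≤ x 1))) :
    ∀ i j : ULift.{u} (Fin 2),
      pairLegs F s i ≫ res F (inf_le_left : x i.down ⊓ x j.down ≤ x i.down)
        = pairLegs F s j ≫ res F inf_le_right := by
  rintro ⟨⟨i, hi⟩⟩ ⟨⟨j, hj⟩⟩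
  interval_cases i <;> interval_cases j
  · rfl
  · exact s.condition
  · have key := congrArg
      (· ≫ res F (le_inf inf_le_right inf_le_left : x 1 ⊓ x 0 ≤ x 0 ⊓ x 1))
      s.condition
    simp only [Category.assoc, res_res] at key
    exact key.symm
  · rfl

/-- The cone over the pairwise diagram induced by a pullback cone. -/
def pairCone {x : Fin 2 → L}
    (s : PullbackCone (res F (inf_le_left : x 0 ⊓ x 1 ≤ x 0))
      (res F (inf_le_right : x 0 ⊓ x 1 ≤ x 1))) :
    Cone ((Pairwise.diagram (fun i : ULift.{u} (Fin 2) => x i.down)).op ⋙ F) :=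
  pairwiseCone F _ s.pt (pairLegs F s) (pairLegs_w F s)

/-- Transport a pullback square along an equality of the apex. -/
lemma pb_congr {a b q p p' : L} (hpp' : p = p')
    (h1 : a ≤ p) (h2 : b ≤ p) (h3 : q ≤ a) (h4 : q ≤ b)
    (main : IsPullback (res F h1) (res F h2) (res F h3) (res F h4))
    (h1' : a ≤ p') (h2' : b ≤ p') :
    IsPullback (res F h1') (res F h2') (res F h3) (res F h4) := by
  subst hpp'; exact main

/-- The `n = 2` case gives the pullback squares. -/
lemma isPullbackOf {x : Fin 2 → L}
    (h : IsLimit (F.mapCone (finJoinCocone x).op)) :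
    IsPullback (res F (le_sup_left : x 0 ≤ x 0 ⊔ x 1))
      (res F (le_sup_right : x 1 ≤ x 0 ⊔ x 1))
      (res F (inf_le_left : x 0 ⊓ x 1 ≤ x 0))
      (res F (inf_le_right : x 0 ⊓ x 1 ≤ x 1)) := by
  have hS : Finset.univ.sup x = x 0 ⊔ x 1 := by
    simp [sup_univ_succ]
  have h1 : x 0 ≤ Finset.univ.sup x := Finset.le_sup (Finset.mem_univ 0)
  have h2 : x 1 ≤ Finset.univ.sup x := Finset.le_sup (Finset.mem_univ 1)
  have comm : res F h1 ≫ res F (inf_le_left : x 0 ⊓ x 1 ≤ x 0)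
      = res F h2 ≫ res F inf_le_right := by
    rw [res_res, res_res]
  have main : IsPullback (res F h1) (res F h2)
      (res F (inf_le_left : x 0 ⊓ x 1 ≤ x 0)) (res F inf_le_right) := by
    apply IsPullback.of_isLimit (c := PullbackCone.mk _ _ comm)
    refine PullbackCone.IsLimit.mk comm (fun s => h.lift (pairCone F s))
      (fun s => ?_) (fun s => ?_) (fun s m hm1 hm2 => ?_)
    · exact h.fac (pairCone F s) (Opposite.op (.single ⟨⟨0, by omega⟩⟩))
    · exact h.fac (pairCone F s) (Opposite.op (.single ⟨⟨1, by omega⟩⟩))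
    · refine pairwise_hom_ext F h ?_
      rintro ⟨⟨i, hi⟩⟩
      interval_cases i
      · exact hm1.trans
          (h.fac (pairCone F s) (Opposite.op (.single ⟨⟨0, hi⟩⟩))).symm
      · exact hm2.trans
          (h.fac (pairCone F s) (Opposite.op (.single ⟨⟨1, hi⟩⟩))).symm
  exact pb_congr F hS h1 h2 _ _ main _ _

end

end LatticeSheafAux

/-- A presheaf `F` on a distributive lattice `L` (with bottom) is a sheaf (for every
finite family `x₁,…,xₙ`, `F(⋁ᵢ xᵢ)` is the limit of the diagram
`F(xᵢ) → F(xᵢ ∧ xⱼ) ← F(xⱼ)`) iff `F(⊥)` is terminal and for all `x, y` the square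
over `F(x ∨ y)`, `F(x)`, `F(y)`, `F(x ∧ y)` is a pullback. -/
theorem lattice_sheaf_iff_terminal_and_pullback {L : Type u} [DistribLattice L]
    [OrderBot L] {C : Type*} [Category C] [HasFiniteLimits C] (F : Lᵒᵖ ⥤ C) :
    (∀ (n : ℕ) (x : Fin n → L),
        Nonempty (IsLimit (F.mapCone (finJoinCocone x).op))) ↔
      Nonempty (IsTerminal (F.obj (Opposite.op (⊥ : L)))) ∧
        ∀ x y : L,
          IsPullback (F.map (homOfLE (le_sup_left : x ≤ x ⊔ y)).op)
            (F.map (homOfLE (le_sup_right : y ≤ x ⊔ y)).op)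
            (F.map (homOfLE (inf_le_left : x ⊓ y ≤ x)).op)
            (F.map (homOfLE (inf_le_right : x ⊓ y ≤ y)).op) := by
  constructor
  · intro h
    refine ⟨⟨LatticeSheafAux.isTerminalOf F (h 0 Fin.elim0).some⟩, ?_⟩
    intro a b
    exact LatticeSheafAux.isPullbackOf F (h 2 ![a, b]).some
  · rintro ⟨⟨hT⟩, hpb⟩ n
    induction n with
    | zero => exact fun x => ⟨LatticeSheafAux.isLimitEmpty F hT x⟩
    | succ n ih =>
      exact fun x => ⟨LatticeSheafAux.step F x (ih _).some (ih _).some hpb⟩
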